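/- Let s₁, s₂, s₃ be three pairwise distinct real numbers. Every line in ℝ³ that meets each of the lines R(s₁), R(s₂), R(s₃) is equal to C(t) for some t ∈ ℝ. -/

import Mathlib

open Set

noncomputable section

/-- The line in ℝ³ through `a` with direction `v`. -/
def lineThrough (a v : ℝ × ℝ × ℝ) : Set (ℝ × ℝ × ℝ) :=
  {p | ∃ r : ℝ, p = a + r • v}

/-- `L` is a line in ℝ³. -/
def IsLine (L : Set (ℝ × ℝ × ℝ)) : Prop :=
  ∃ a v : ℝ × ℝ × ℝ, v ≠ 0 ∧ L = lineThrough a v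

/-- `L` is a transversal to the family of sets `s`: it is a line meeting every `s i`. -/
def IsTransversal {n : ℕ} (s : Fin n → Set (ℝ × ℝ × ℝ)) (L : Set (ℝ × ℝ × ℝ)) : Prop :=
  IsLine L ∧ ∀ i, (L ∩ s i).Nonempty

/-- Two transversals `L₀`, `L₁` to the family `s` lie in the same connected component of
transversals: one can be moved continuously to the other while remaining a transversal. -/
def SameComp {n : ℕ} (s : Fin n → Set (ℝ × ℝ × ℝ)) (L₀ L₁ : Set (ℝ × ℝ × ℝ)) : Prop :=
  ∃ a v : ℝ → ℝ × ℝ × ℝ,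
    ContinuousOn a (Icc 0 1) ∧ ContinuousOn v (Icc 0 1) ∧
    (∀ t ∈ Icc (0:ℝ) 1, v t ≠ 0) ∧
    (∀ t ∈ Icc (0:ℝ) 1, ∀ i, (lineThrough (a t) (v t) ∩ s i).Nonempty) ∧
    lineThrough (a 0) (v 0) = L₀ ∧ lineThrough (a 1) (v 1) = L₁

/-- The line `R(s) = {(s, t, s*t) : t ∈ ℝ}` of the first ruling of `z = x*y`. -/
def Rline (s : ℝ) : Set (ℝ × ℝ × ℝ) := {p | ∃ t : ℝ, p = (s, t, s * t)}

/-- The line `C(t) = {(u, t, u*t) : u ∈ ℝ}` of the second ruling of `z = x*y`. -/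
def Cline (t : ℝ) : Set (ℝ × ℝ × ℝ) := {p | ∃ u : ℝ, p = (u, t, u * t)}

/-- every line meeting `R(s₁)`, `R(s₂)`, `R(s₃)` for pairwise distinct
`s₁, s₂, s₃` is a line `C(t)` of the second ruling. -/
theorem stmt_5 (s₁ s₂ s₃ : ℝ) (h12 : s₁ ≠ s₂) (h13 : s₁ ≠ s₃) (h23 : s₂ ≠ s₃)
    (L : Set (ℝ × ℝ × ℝ)) (hL : IsLine L)
    (m1 : (L ∩ Rline s₁).Nonempty) (m2 : (L ∩ Rline s₂).Nonempty)
    (m3 : (L ∩ Rline s₃).Nonempty) :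
    ∃ t : ℝ, L = Cline t := by
  obtain ⟨a, v, hv, rfl⟩ := hL
  -- extract the three intersection points
  obtain ⟨p₁, ⟨r₁, hp₁⟩, t₁, hq₁⟩ := m1
  obtain ⟨p₂, ⟨r₂, hp₂⟩, t₂, hq₂⟩ := m2
  obtain ⟨p₃, ⟨r₃, hp₃⟩, t₃, hq₃⟩ := m3
  rw [hq₁] at hp₁; rw [hq₂] at hp₂; rw [hq₃] at hp₃
  have ext : ∀ (s t : ℝ) (r : ℝ), ((s, t, s*t) : ℝ × ℝ × ℝ) = a + r • v →
      s = a.1 + r * v.1 ∧ t = a.2.1 + r * v.2.1 ∧ s * t = a.2.2 + r * v.2.2 := by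
    intro s t r h
    rw [Prod.ext_iff, Prod.ext_iff] at h
    simpa using h
  obtain ⟨e11, e12, e13⟩ := ext _ _ _ hp₁
  obtain ⟨e21, e22, e23⟩ := ext _ _ _ hp₂
  obtain ⟨e31, e32, e33⟩ := ext _ _ _ hp₃
  set A := v.1 * v.2.1 with hAdef
  set B := a.1 * v.2.1 + a.2.1 * v.1 - v.2.2 with hBdef
  set C := a.1 * a.2.1 - a.2.2 with hCdef
  have q₁ : A * r₁^2 + B * r₁ + C = 0 := by
    linear_combination -(a.2.1 + r₁*v.2.1) * e11 - s₁ * e12 + e13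
  have q₂ : A * r₂^2 + B * r₂ + C = 0 := by
    linear_combination -(a.2.1 + r₂*v.2.1) * e21 - s₂ * e22 + e23
  have q₃ : A * r₃^2 + B * r₃ + C = 0 := by
    linear_combination -(a.2.1 + r₃*v.2.1) * e31 - s₃ * e32 + e33
  have hr12 : r₁ ≠ r₂ := by rintro rfl; exact h12 (by linarith [e11, e21])
  have hr13 : r₁ ≠ r₃ := by rintro rfl; exact h13 (by linarith [e11, e31])
  have hr23 : r₂ ≠ r₃ := by rintro rfl; exact h23 (by linarith [e21, e31])
  have l12 : A * (r₁ + r₂) + B = 0 := by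
    have h : (r₁ - r₂) * (A * (r₁ + r₂) + B) = 0 := by linear_combination q₁ - q₂
    rcases mul_eq_zero.mp h with h | h
    · exact absurd (sub_eq_zero.mp h) hr12
    · exact h
  have l13 : A * (r₁ + r₃) + B = 0 := by
    have h : (r₁ - r₃) * (A * (r₁ + r₃) + B) = 0 := by linear_combination q₁ - q₃
    rcases mul_eq_zero.mp h with h | h
    · exact absurd (sub_eq_zero.mp h) hr13
    · exact h
  have hA : A = 0 := by
    have h : A * (r₂ - r₃) = 0 := by linear_combination l12 - l13
    rcases mul_eq_zero.mp h with h | h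
    · exact h
    · exact absurd (sub_eq_zero.mp h) hr23
  have hB : B = 0 := by rw [hA] at l12; linarith
  have hC : C = 0 := by rw [hA, hB] at q₁; linarith
  have hv1 : v.1 ≠ 0 := by
    intro h
    apply h12
    rw [e11, e21, h, mul_zero, mul_zero]
  have hv2 : v.2.1 = 0 := by
    rcases mul_eq_zero.mp hA with h | h
    · exact absurd h hv1
    · exact h
  have hv3 : v.2.2 = a.2.1 * v.1 := by rw [hBdef, hv2] at hB; linarith
  have ha3 : a.2.2 = a.1 * a.2.1 := by rw [hCdef] at hC; linarith
  refine ⟨a.2.1, ?_⟩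
  ext p
  constructor
  · rintro ⟨r, rfl⟩
    refine ⟨a.1 + r * v.1, ?_⟩
    rw [Prod.ext_iff, Prod.ext_iff]
    refine ⟨by simp, by simp [hv2], ?_⟩
    simp only [Prod.snd_add, Prod.smul_snd, smul_eq_mul]
    rw [hv3, ha3]; ring
  · rintro ⟨u, rfl⟩
    refine ⟨(u - a.1) / v.1, ?_⟩
    rw [Prod.ext_iff, Prod.ext_iff]
    refine ⟨by simp only [Prod.fst_add, Prod.smul_fst, smul_eq_mul]; rw [div_mul_cancel₀ _ hv1]; ring, by simp [hv2], ?_⟩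
    simp only [Prod.snd_add, Prod.smul_snd, smul_eq_mul]
    rw [hv3, ha3]; field_simp; ring
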